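/- There exists a function f : ℚ → ℚ with f ∘ f = id such that f is discontinuous at every point of ℚ. -/

import Mathlib

def Dy (q : ℚ) : Prop := ∃ (a : ℤ) (n : ℕ), q * 2 ^ n = (a : ℚ)

lemma Dy_sub {a b : ℚ} (ha : Dy a) (hb : Dy b) : Dy (a - b) := by
  obtain ⟨i, n, hi⟩ := ha
  obtain ⟨j, m, hj⟩ := hb
  exact ⟨i * 2 ^ m - j * 2 ^ n, n + m, by push_cast; rw [← hi, ← hj]; ring⟩

lemma Dy_add_one {q : ℚ} (h : Dy q) : Dy (q + 1) := by
  obtain ⟨i, n, hi⟩ := h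
  exact ⟨i + 2 ^ n, n, by push_cast [add_mul, hi]; ring⟩

lemma Dy_sub_one {q : ℚ} (h : Dy q) : Dy (q - 1) := by
  obtain ⟨i, n, hi⟩ := h
  exact ⟨i - 2 ^ n, n, by push_cast [sub_mul, hi]; ring⟩

lemma not_Dy_add_one {q : ℚ} (h : ¬ Dy q) : ¬ Dy (q + 1) := by
  intro hd
  exact h (by simpa using Dy_sub_one hd)

lemma not_Dy_sub_one {q : ℚ} (h : ¬ Dy q) : ¬ Dy (q - 1) := by
  intro hd
  exact h (by simpa using Dy_add_one hd)

lemma not_Dy_third (m : ℕ) : ¬ Dy ((1 : ℚ) / 3 ^ (m + 1)) := by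
  rintro ⟨a, n, h⟩
  have h3 : (3 : ℚ) ^ (m + 1) ≠ 0 := by positivity
  have h2 : ((2 : ℤ) ^ n : ℚ) = ((a * 3 ^ (m + 1) : ℤ) : ℚ) := by
    push_cast
    field_simp at h
    linarith [h]
  have h2' : (2 : ℤ) ^ n = a * 3 ^ (m + 1) := by exact_mod_cast h2
  have : (3 : ℤ) ∣ 2 ^ n := ⟨a * 3 ^ m, by rw [h2']; ring⟩
  have := (Int.Prime.dvd_pow' (by norm_num) this)
  norm_num at this

open Classical in
noncomputable def fwild (q : ℚ) : ℚ :=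
  if Dy q then q else (if Even ⌊q⌋ then q + 1 else q - 1)

lemma fwild_of_Dy {q : ℚ} (h : Dy q) : fwild q = q := if_pos h

lemma fwild_of_not_Dy {q : ℚ} (h : ¬ Dy q) :
    fwild q = if Even ⌊q⌋ then q + 1 else q - 1 := if_neg h

lemma fwild_invol (q : ℚ) : fwild (fwild q) = q := by
  by_cases h : Dy q
  · rw [fwild_of_Dy h, fwild_of_Dy h]
  · rw [fwild_of_not_Dy h]
    by_cases he : Even ⌊q⌋
    · rw [if_pos he, fwild_of_not_Dy (not_Dy_add_one h)]
      have hf : ⌊q + 1⌋ = ⌊q⌋ + 1 := Int.floor_add_one q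
      rw [if_neg (by rw [hf, Int.even_add_one]; simpa using he)]
      ring
    · rw [if_neg he, fwild_of_not_Dy (not_Dy_sub_one h)]
      have hf : ⌊q - 1⌋ = ⌊q⌋ - 1 := by exact_mod_cast Int.floor_sub_intCast q 1
      rw [if_pos (by rw [hf, Int.even_sub_one]; simpa using he)]
      ring


theorem stmt_11 : ∃ f : ℚ → ℚ, (∀ x, f (f x) = x) ∧
    ∀ x : ℚ, ¬ ContinuousAt f x := by
  refine ⟨fwild, fwild_invol, ?_⟩
  intro x hc
  rw [Metric.continuousAt_iff] at hc
  obtain ⟨δ, hδ, H⟩ := hc (1/2) (by norm_num)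
  by_cases h : Dy x
  · -- x dyadic : approach by non-dyadic points
    obtain ⟨m, hm⟩ := exists_pow_lt_of_lt_one hδ (by norm_num : (1/3:ℝ) < 1)
    set y : ℚ := x + 1/3^(m+1) with hy
    have hny : ¬ Dy y := fun hd => not_Dy_third m (by simpa [hy] using Dy_sub hd h)
    have hyx : (y : ℝ) - x = (1/3 : ℝ)^(m+1) := by
      rw [hy]; push_cast; ring_nf; rw [one_div]
    have hc1 : (0:ℝ) < (1/3:ℝ)^(m+1) := by positivity
    have hc2 : (1/3:ℝ)^(m+1) ≤ (1/3:ℝ)^m :=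
      pow_le_pow_of_le_one (by norm_num) (by norm_num) (by omega)
    have hc3 : (1/3:ℝ)^(m+1) ≤ 1/3 := by
      simpa using pow_le_pow_of_le_one (by norm_num : (0:ℝ) ≤ 1/3) (by norm_num) (by omega : 1 ≤ m+1)
    have hdist : dist y x < δ := by
      rw [Rat.dist_eq, hyx, abs_of_pos hc1]; linarith
    have := H hdist
    rw [fwild_of_Dy h, fwild_of_not_Dy hny] at this
    have hd1 : (0:ℝ) < (y:ℝ) - x := hyx ▸ hc1
    have hd3 : (y:ℝ) - x ≤ 1/3 := hyx ▸ hc3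
    by_cases he : Even ⌊y⌋
    · rw [if_pos he, Rat.dist_eq] at this
      push_cast at this
      rw [show ((y:ℝ) + 1 - x) = ((y:ℝ) - x) + 1 from by ring,
        abs_of_pos (by linarith)] at this
      linarith
    · rw [if_neg he, Rat.dist_eq] at this
      push_cast at this
      rw [show ((y:ℝ) - 1 - x) = ((y:ℝ) - x) - 1 from by ring,
        abs_of_neg (by linarith)] at this
      linarith
  · -- x not dyadic : approach by dyadic points
    obtain ⟨n, hn⟩ := exists_pow_lt_of_lt_one hδ (by norm_num : (1/2:ℝ) < 1)
    set y : ℚ := (⌊x * 2^(n+1)⌋ : ℚ) / 2^(n+1) with hy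
    have hdy : Dy y := ⟨⌊x * 2^(n+1)⌋, n+1, by rw [hy]; field_simp⟩
    have hp : (0:ℚ) < 2^(n+1) := by positivity
    have h1 : y ≤ x := by
      rw [hy, div_le_iff₀ hp]
      exact Int.floor_le _
    have h2 : x - y < 1/2^(n+1) := by
      rw [hy]
      rw [sub_lt_iff_lt_add, ← add_div, lt_div_iff₀ hp]
      have := Int.lt_floor_add_one (x * 2^(n+1))
      push_cast
      linarith
    have hq1 : (y:ℝ) ≤ x := by exact_mod_cast h1
    have hq2 : (x:ℝ) - y < (1/2:ℝ)^(n+1) := by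
      have h2' : ((x - y : ℚ) : ℝ) < ((1/2^(n+1) : ℚ) : ℝ) := by exact_mod_cast h2
      push_cast at h2'
      rw [div_pow, one_pow]
      exact h2'
    have hc2 : (1/2:ℝ)^(n+1) ≤ (1/2:ℝ)^n :=
      pow_le_pow_of_le_one (by norm_num) (by norm_num) (by omega)
    have hc3 : (1/2:ℝ)^(n+1) ≤ 1/2 := by
      simpa using pow_le_pow_of_le_one (by norm_num : (0:ℝ) ≤ 1/2) (by norm_num) (by omega : 1 ≤ n+1)
    have hdist : dist y x < δ := by
      rw [Rat.dist_eq, abs_of_nonpos (by linarith)]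
      linarith
    have key := H hdist
    rw [fwild_of_Dy hdy, fwild_of_not_Dy h] at key
    by_cases he : Even ⌊x⌋
    · rw [if_pos he, Rat.dist_eq] at key
      push_cast at key
      rw [show ((y:ℝ) - (x + 1)) = ((y:ℝ) - x) - 1 from by ring,
        abs_of_neg (by linarith)] at key
      linarith
    · rw [if_neg he, Rat.dist_eq] at key
      push_cast at key
      rw [show ((y:ℝ) - (x - 1)) = ((y:ℝ) - x) + 1 from by ring,
        abs_of_pos (by linarith)] at key
      linarith
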